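/- If a system of linear Diophantine equations A x = b with x ≥ 0 has a solution in the naturals, where A is an m × d integer matrix and b an integer vector, with all entries of A and b bounded in absolute value by M, then it has a solution in which every coordinate of x is at most (d * M)^(2m+1) (some fixed exponential bound in m, d, and M). In particular, there is a constant c such that every solvable system has a solution with all entries at most 2^{(size of the system)^c}. -/

import Mathlib

open Finset

namespace Stmt9Aux

/-- Feasibility of weights `lam` on a subset `B`: box constraints, support,
prescribed total, and zero weighted sums. -/
def Feas {N m : ℕ} (w : Fin N → Fin m → ℚ) (B : Finset (Fin N)) (t : ℚ)
    (lam : Fin N → ℚ) : Prop :=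
  (∀ i, 0 ≤ lam i) ∧ (∀ i, lam i ≤ 1) ∧ (∀ i, i ∉ B → lam i = 0) ∧
  (∑ i ∈ B, lam i = t) ∧ (∀ j, ∑ i ∈ B, lam i * w i j = 0)

/-- Fractional support. -/
noncomputable def frac {N : ℕ} (lam : Fin N → ℚ) : Finset (Fin N) := by
  classical exact Finset.univ.filter (fun i => 0 < lam i ∧ lam i < 1)

lemma mem_frac {N : ℕ} {lam : Fin N → ℚ} {i : Fin N} :
    i ∈ frac lam ↔ 0 < lam i ∧ lam i < 1 := by
  simp [frac]

/-- Rounding: any feasible weight vector can be modified to one with at most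
`m+1` fractional coordinates. -/
lemma rounding {N m : ℕ} (w : Fin N → Fin m → ℚ) (B : Finset (Fin N)) (t : ℚ) :
    ∀ n (lam : Fin N → ℚ), (frac lam).card ≤ n → Feas w B t lam →
      ∃ lam', Feas w B t lam' ∧ (frac lam').card ≤ m + 1 := by
  classical
  intro n
  induction n with
  | zero => intro lam h hF; exact ⟨lam, hF, h.trans (Nat.zero_le _)⟩
  | succ n ih =>
    intro lam hcard hF
    by_cases hsmall : (frac lam).card ≤ m + 1
    · exact ⟨lam, hF, hsmall⟩
    push_neg at hsmall
    obtain ⟨h0, h1, hsupp, hsum, hwsum⟩ := hF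
    set F := frac lam with hFdef
    -- the family i ↦ (w i, 1) over F is linearly dependent
    have hdep : ¬ LinearIndependent ℚ (fun i : F => (Fin.snoc (w i.1) 1 : Fin (m+1) → ℚ)) := by
      intro hli
      have := hli.fintype_card_le_finrank
      rw [Module.finrank_fin_fun, Fintype.card_coe] at this
      omega
    rw [Fintype.not_linearIndependent_iff] at hdep
    obtain ⟨g, hg, i₀, hgi₀⟩ := hdep
    set gh : Fin N → ℚ := fun i => if h : i ∈ F then g ⟨i, h⟩ else 0 with ghdef
    have hgh_mem : ∀ i, gh i ≠ 0 → i ∈ F := by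
      intro i hi
      by_contra hmem
      simp [ghdef, hmem] at hi
    have hFB : F ⊆ B := by
      intro i hi
      by_contra hmem
      have := hsupp i hmem
      rw [mem_frac] at hi
      rw [this] at hi
      exact lt_irrefl 0 hi.1
    -- componentwise consequences of the dependence
    have hcomp : ∀ j : Fin m, ∑ i ∈ F, gh i * w i j = 0 := by
      intro j
      have := congrFun hg (Fin.castSucc j)
      simp only [Finset.sum_apply, Pi.smul_apply, Fin.snoc_castSucc, smul_eq_mul,
        Pi.zero_apply] at this
      rw [← this, ← Finset.sum_attach F (fun i => gh i * w i j)]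
      apply Finset.sum_congr rfl
      intro i _
      simp [ghdef, i.2]
    have hsumg : ∑ i ∈ F, gh i = 0 := by
      have := congrFun hg (Fin.last m)
      simp only [Finset.sum_apply, Pi.smul_apply, Fin.snoc_last, smul_eq_mul, mul_one,
        Pi.zero_apply] at this
      rw [← this, ← Finset.sum_attach F (fun i => gh i)]
      apply Finset.sum_congr rfl
      intro i _
      simp [ghdef, i.2]
    -- set of moving coordinates
    set D : Finset (Fin N) := F.filter (fun i => gh i ≠ 0) with hDdef
    have hDne : D.Nonempty := by
      refine ⟨i₀.1, ?_⟩
      rw [hDdef, Finset.mem_filter]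
      refine ⟨i₀.2, ?_⟩
      simpa [ghdef, i₀.2] using hgi₀
    set thr : Fin N → ℚ := fun i => if 0 < gh i then (1 - lam i) / gh i else lam i / (-gh i)
      with thrdef
    obtain ⟨iS, hiSD, hmin⟩ := D.exists_min_image thr hDne
    set tS : ℚ := thr iS with tSdef
    have hiSF : iS ∈ F := (Finset.mem_filter.1 hiSD).1
    have hiSg : gh iS ≠ 0 := (Finset.mem_filter.1 hiSD).2
    have hfrS : 0 < lam iS ∧ lam iS < 1 := mem_frac.1 hiSF
    have htS_pos : 0 < tS := by
      rw [tSdef, thrdef]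
      rcases lt_or_gt_of_ne hiSg with h | h
      · simp only [not_lt.2 h.le, if_neg (not_lt.2 h.le)]
        exact div_pos hfrS.1 (by linarith)
      · simp only [if_pos h]
        exact div_pos (by linarith [hfrS.2]) h
    -- thresholds are valid: moving by tS stays in the box
    have hthr : ∀ i ∈ D, 0 ≤ lam i + tS * gh i ∧ lam i + tS * gh i ≤ 1 := by
      intro i hiD
      have hiF : i ∈ F := (Finset.mem_filter.1 hiD).1
      have hig : gh i ≠ 0 := (Finset.mem_filter.1 hiD).2
      have hfr : 0 < lam i ∧ lam i < 1 := mem_frac.1 hiF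
      have hle : tS ≤ thr i := hmin i hiD
      rcases lt_or_gt_of_ne hig with h | h
      · -- gh i < 0 : thr i = lam i / (-gh i)
        have hthri : thr i = lam i / (-gh i) := by
          rw [thrdef]; simp [not_lt.2 h.le]
        constructor
        · have : tS * (-gh i) ≤ (lam i / (-gh i)) * (-gh i) := by
            apply mul_le_mul_of_nonneg_right (hthri ▸ hle) (by linarith)
          rw [div_mul_cancel₀ _ (by linarith : -gh i ≠ 0)] at this
          nlinarith
        · nlinarith [htS_pos]
      · -- gh i > 0 : thr i = (1 - lam i)/gh i
        have hthri : thr i = (1 - lam i) / gh i := by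
          rw [thrdef]; simp [h]
        constructor
        · nlinarith [htS_pos]
        · have : tS * gh i ≤ ((1 - lam i) / gh i) * gh i := by
            apply mul_le_mul_of_nonneg_right (hthri ▸ hle) h.le
          rw [div_mul_cancel₀ _ (ne_of_gt h)] at this
          linarith
    set lam' : Fin N → ℚ := fun i => lam i + tS * gh i with lam'def
    have hfix : ∀ i, gh i = 0 → lam' i = lam i := by
      intro i h; simp [lam'def, h]
    have hbox' : ∀ i, 0 ≤ lam' i ∧ lam' i ≤ 1 := by
      intro i
      by_cases hig : gh i = 0
      · rw [hfix i hig]; exact ⟨h0 i, h1 i⟩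
      · have hiD : i ∈ D := Finset.mem_filter.2 ⟨hgh_mem i hig, hig⟩
        exact hthr i hiD
    have hghB : ∑ i ∈ B, gh i = 0 := by
      rw [← Finset.sum_subset hFB (fun i _ hi => by
        by_contra hne
        exact hi (hgh_mem i hne))]
      exact hsumg
    have hghwB : ∀ j, ∑ i ∈ B, gh i * w i j = 0 := by
      intro j
      rw [← Finset.sum_subset hFB (fun i _ hi => by
        by_cases hne : gh i = 0
        · simp [hne]
        · exact absurd (hgh_mem i hne) hi)]
      exact hcomp j
    have hF' : Feas w B t lam' := by
      refine ⟨fun i => (hbox' i).1, fun i => (hbox' i).2, ?_, ?_, ?_⟩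
      · intro i hi
        have hiF : i ∉ F := fun h => hi (hFB h)
        have : gh i = 0 := by
          by_contra hne; exact hiF (hgh_mem i hne)
        rw [hfix i this]; exact hsupp i hi
      · simp only [lam'def]
        rw [Finset.sum_add_distrib, hsum, ← Finset.mul_sum, hghB, mul_zero, add_zero]
      · intro j
        simp only [lam'def, add_mul]
        rw [Finset.sum_add_distrib, hwsum j]
        have : ∑ i ∈ B, tS * gh i * w i j = tS * ∑ i ∈ B, gh i * w i j := by
          rw [Finset.mul_sum]; apply Finset.sum_congr rfl; intro i _; ring
        rw [this, hghwB j, mul_zero, add_zero]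
    -- the fractional support strictly decreased
    have hsub : frac lam' ⊆ F := by
      intro i hi
      by_contra hiF
      have : gh i = 0 := by
        by_contra hne; exact hiF (hgh_mem i hne)
      rw [mem_frac, hfix i this] at hi
      exact hiF (mem_frac.2 hi)
    have hiSout : iS ∉ frac lam' := by
      rw [mem_frac]
      rcases lt_or_gt_of_ne hiSg with h | h
      · -- gh iS < 0, lam' iS = 0
        have : lam' iS = 0 := by
          have hthri : tS = lam iS / (-gh iS) := by
            rw [tSdef, thrdef]; simp [not_lt.2 h.le]
          rw [lam'def]
          simp only
          rw [hthri, div_neg]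
          field_simp
          ring
        rw [this]; intro hc; exact absurd hc.1 (lt_irrefl 0)
      · -- gh iS > 0, lam' iS = 1
        have : lam' iS = 1 := by
          have hthri : tS = (1 - lam iS) / gh iS := by
            rw [tSdef, thrdef]; simp [h]
          rw [lam'def]
          simp only
          rw [hthri]
          field_simp
          ring
        rw [this]; intro hc; exact absurd hc.2 (lt_irrefl 1)
    have hlt : (frac lam').card < F.card :=
      Finset.card_lt_card ⟨hsub, fun hs => hiSout (hs hiSF)⟩
    exact ih lam' (by omega) hF'

/-- Step: from a witnessed set of size `≥ m+1` one can remove an element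
keeping a witness. -/
lemma step {N m : ℕ} (w : Fin N → Fin m → ℚ) (B : Finset (Fin N)) (lam : Fin N → ℚ)
    (hW : Feas w B ((B.card : ℚ) - m) lam) (hc : m + 1 ≤ B.card) :
    ∃ i ∈ B, ∃ lam', Feas w (B.erase i) (((B.erase i).card : ℚ) - m) lam' := by
  classical
  obtain ⟨h0, h1, hsupp, hsum, hwsum⟩ := hW
  set c : ℚ := (B.card : ℚ) - m with hcdef
  have hc1 : 1 ≤ c := by
    rw [hcdef]
    have : (m : ℚ) + 1 ≤ (B.card : ℚ) := by exact_mod_cast hc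
    linarith
  have hcne : c ≠ 0 := by linarith
  set r : ℚ := (c - 1) / c with hrdef
  have hr0 : 0 ≤ r := div_nonneg (by linarith) (by linarith)
  have hr1 : r ≤ 1 := by
    rw [hrdef, div_le_one (by linarith)]; linarith
  set mu0 : Fin N → ℚ := fun i => r * lam i with hmu0
  have hFeas0 : Feas w B (c - 1) mu0 := by
    refine ⟨fun i => mul_nonneg hr0 (h0 i), fun i => ?_, fun i hi => ?_, ?_, fun j => ?_⟩
    · calc r * lam i ≤ 1 * 1 := mul_le_mul hr1 (h1 i) (h0 i) zero_le_one
      _ = 1 := one_mul 1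
    · simp [hmu0, hsupp i hi]
    · rw [hmu0]
      simp only
      rw [← Finset.mul_sum, hsum, hrdef, div_mul_cancel₀ _ hcne]
    · have : ∑ i ∈ B, r * lam i * w i j = r * ∑ i ∈ B, lam i * w i j := by
        rw [Finset.mul_sum]; apply Finset.sum_congr rfl; intro i _; ring
      rw [hmu0]; simp only
      rw [this, hwsum j, mul_zero]
  obtain ⟨mu, hmuF, hmucard⟩ := rounding w B (c - 1) _ mu0 le_rfl hFeas0
  obtain ⟨m0, m1, msupp, msum, mwsum⟩ := hmuF
  -- find i ∈ B with mu i = 0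
  have hzero : ∃ i ∈ B, mu i = 0 := by
    by_contra hno
    push_neg at hno
    have hpos : ∀ i ∈ B, 0 < mu i := fun i hi => lt_of_le_of_ne (m0 i) (Ne.symm (hno i hi))
    set Fb : Finset (Fin N) := B.filter (fun i => mu i ≠ 1) with hFbdef
    have hFbfrac : Fb ⊆ frac mu := by
      intro i hi
      rw [Finset.mem_filter] at hi
      rw [mem_frac]
      exact ⟨hpos i hi.1, lt_of_le_of_ne (m1 i) hi.2⟩
    have hFbcard : Fb.card ≤ m + 1 := le_trans (Finset.card_le_card hFbfrac) hmucard
    have hsplit : ∑ i ∈ Fb, mu i = c - 1 - (B.filter (fun i => mu i = 1)).card := by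
      have := Finset.sum_filter_add_sum_filter_not B (fun i => mu i = 1) mu
      have hones : ∑ i ∈ B.filter (fun i => mu i = 1), mu i
          = ((B.filter (fun i => mu i = 1)).card : ℚ) := by
        rw [Finset.sum_congr rfl (fun i hi => (Finset.mem_filter.1 hi).2)]
        simp
      rw [hones, msum] at this
      rw [hFbdef]
      linarith
    have hcards : (B.filter (fun i => mu i = 1)).card + Fb.card = B.card := by
      rw [hFbdef]; exact Finset.card_filter_add_card_filter_not _
    -- sum over Fb equals card Fb - (m+1)
    have hkey : ∑ i ∈ Fb, mu i = (Fb.card : ℚ) - (m + 1) := by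
      rw [hsplit, hcdef]
      have : ((B.filter (fun i => mu i = 1)).card : ℚ) = (B.card : ℚ) - (Fb.card : ℚ) := by
        have := hcards
        push_cast [← this]
        ring
      rw [this]; ring
    rcases Finset.eq_empty_or_nonempty Fb with hFe | hFne
    · rw [hFe] at hkey
      simp at hkey
      have : (0:ℚ) < m + 1 := by positivity
      linarith
    · have hposum : 0 < ∑ i ∈ Fb, mu i :=
        Finset.sum_pos (fun i hi => hpos i (Finset.mem_filter.1 hi).1) hFne
      have : (Fb.card : ℚ) ≤ (m : ℚ) + 1 := by exact_mod_cast hFbcard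
      linarith
  obtain ⟨i, hiB, hmui⟩ := hzero
  refine ⟨i, hiB, mu, m0, m1, fun i' hi' => ?_, ?_, fun j => ?_⟩
  · by_cases he : i' = i
    · rw [he]; exact hmui
    · exact msupp i' (fun hB => hi' (Finset.mem_erase.2 ⟨he, hB⟩))
  · rw [Finset.sum_erase _ hmui, msum, Finset.card_erase_of_mem hiB]
    have hb1 : 1 ≤ B.card := le_trans (by omega) hc
    push_cast [Nat.cast_sub hb1]
    rw [hcdef]; ring
  · rw [Finset.sum_erase _ (by rw [hmui]; ring)]
    exact mwsum j

/-- Chain of nested witnessed subsets of all sizes in `[m, N]`. -/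
lemma chain {N m : ℕ} (w : Fin N → Fin m → ℚ) (hsum : ∀ j, ∑ i, w i j = 0)
    (hmN : m ≤ N) :
    ∀ t, t ≤ N - m → ∃ Ach : ℕ → Finset (Fin N),
      (∀ k, N - t ≤ k → k ≤ N → (Ach k).card = k ∧
        ∃ lam, Feas w (Ach k) ((k : ℚ) - m) lam) ∧
      (∀ k, N - t ≤ k → k < N → Ach k ⊆ Ach (k + 1)) := by
  classical
  intro t
  induction t with
  | zero =>
    intro _
    refine ⟨fun _ => Finset.univ, fun k hk1 hk2 => ?_, fun k hk1 hk2 => by omega⟩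
    have hkN : k = N := by omega
    rw [hkN]
    have hcard : (Finset.univ : Finset (Fin N)).card = N := by simp
    refine ⟨hcard, fun i => ((N : ℚ) - m) / N, ?_, ?_, ?_, ?_, ?_⟩
    · intro i
      have h1 : (m:ℚ) ≤ (N:ℚ) := by exact_mod_cast hmN
      have hN0 : (0:ℚ) ≤ N := by positivity
      exact div_nonneg (by linarith) hN0
    · intro i
      have hN0 : (0:ℚ) < N := by exact_mod_cast i.pos
      rw [div_le_one hN0]
      have : (0:ℚ) ≤ m := by positivity
      linarith
    · intro i hi; exact absurd (Finset.mem_univ i) hi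
    · rcases Nat.eq_zero_or_pos N with h | h
      · subst h
        have hm : m = 0 := by omega
        subst hm
        simp
      · rw [Finset.sum_const, hcard]
        have hNne : (N:ℚ) ≠ 0 := by positivity
        rw [nsmul_eq_mul, mul_div_cancel₀ _ hNne]
    · intro j
      have : ∑ i, ((N : ℚ) - m) / N * w i j = ((N : ℚ) - m) / N * ∑ i, w i j :=
        (Finset.mul_sum _ _ _).symm
      rw [this, hsum j, mul_zero]
  | succ t ih =>
    intro ht
    obtain ⟨Ach, hprop, hnest⟩ := ih (by omega)
    set k₀ := N - t with hk₀
    have hk₀m : m + 1 ≤ k₀ := by omega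
    obtain ⟨hcard₀, lam₀, hlam₀⟩ := hprop k₀ le_rfl (by omega)
    have hW : Feas w (Ach k₀) (((Ach k₀).card : ℚ) - m) lam₀ := by
      rw [hcard₀]; exact hlam₀
    obtain ⟨i, hiB, lam', hlam'⟩ := step w (Ach k₀) lam₀ hW (by omega)
    refine ⟨fun k => if k < k₀ then (Ach k₀).erase i else Ach k, fun k hk1 hk2 => ?_,
      fun k hk1 hk2 => ?_⟩
    · by_cases hkk : k < k₀
      · have hkeq : k = k₀ - 1 := by omega
        have hcarde : ((Ach k₀).erase i).card = k₀ - 1 := by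
          rw [Finset.card_erase_of_mem hiB, hcard₀]
        simp only [if_pos hkk]
        rw [hkeq]
        refine ⟨hcarde, lam', ?_⟩
        have : (((Ach k₀).erase i).card : ℚ) = ((k₀ - 1 : ℕ) : ℚ) := by rw [hcarde]
        rwa [this] at hlam'
      · simp only [if_neg hkk]
        exact hprop k (by omega) hk2
    · by_cases hkk : k < k₀
      · have hkeq : k = k₀ - 1 := by omega
        have hk1k : ¬ (k + 1 < k₀) := by omega
        simp only [if_pos hkk, if_neg hk1k]
        have hkk1 : k + 1 = k₀ := by omega
        rw [hkk1]
        exact Finset.erase_subset _ _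
      · have hk1k : ¬ (k + 1 < k₀) := by omega
        simp only [if_neg hkk, if_neg hk1k]
        exact hnest k (by omega) hk2

/-- Monotonicity of a nested chain. -/
lemma chain_mono {N : ℕ} (Ach : ℕ → Finset (Fin N)) (a b : ℕ)
    (hnest : ∀ k, a ≤ k → k < b → Ach k ⊆ Ach (k + 1)) :
    ∀ k l, a ≤ k → k ≤ l → l ≤ b → Ach k ⊆ Ach l := by
  intro k l hak hkl hlb
  induction l, hkl using Nat.le_induction with
  | base => exact subset_rfl
  | succ l hkl ihl =>
    exact (ihl (by omega)).trans (hnest l (by omega) (by omega))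

/-- Partial sums over witnessed sets are small. -/
lemma sum_bound {N m : ℕ} (w : Fin N → Fin m → ℚ) (B : Finset (Fin N)) (k : ℕ) (C : ℚ)
    (hC : 0 ≤ C) (hw : ∀ i j, |w i j| ≤ C) (lam : Fin N → ℚ)
    (hF : Feas w B ((k : ℚ) - m) lam) (hcard : B.card = k) (j : Fin m) :
    |∑ i ∈ B, w i j| ≤ m * C := by
  obtain ⟨h0, h1, _, hsum, hwsum⟩ := hF
  have key0 : ∑ i ∈ B, (1 - lam i) * w i j
      = ∑ i ∈ B, w i j - ∑ i ∈ B, lam i * w i j := by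
    rw [← Finset.sum_sub_distrib]
    apply Finset.sum_congr rfl; intro i _; ring
  have key : ∑ i ∈ B, w i j = ∑ i ∈ B, (1 - lam i) * w i j := by
    rw [key0, hwsum j, sub_zero]
  rw [key]
  calc |∑ i ∈ B, (1 - lam i) * w i j| ≤ ∑ i ∈ B, |(1 - lam i) * w i j| :=
        Finset.abs_sum_le_sum_abs _ _
    _ ≤ ∑ i ∈ B, (1 - lam i) * C := by
        apply Finset.sum_le_sum
        intro i _
        rw [abs_mul, abs_of_nonneg (by linarith [h1 i] : (0:ℚ) ≤ 1 - lam i)]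
        exact mul_le_mul_of_nonneg_left (hw i j) (by linarith [h1 i])
    _ = ((B.card : ℚ) - ((k : ℚ) - m)) * C := by
        have : ∑ i ∈ B, (1 - lam i) * C = ∑ i ∈ B, (C - lam i * C) := by
          apply Finset.sum_congr rfl; intro i _; ring
        rw [this, Finset.sum_sub_distrib, Finset.sum_const, ← Finset.sum_mul, hsum,
          nsmul_eq_mul]
        ring
    _ = (m : ℚ) * C := by rw [hcard]; ring

/-- Counting fibers of the index function coming from a sigma-type equivalence. -/
lemma fiber_card {d : ℕ} (x : Fin d → ℕ) {N : ℕ} (e : (Σ j : Fin d, Fin (x j)) ≃ Fin N)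
    (j : Fin d) :
    (Finset.univ.filter (fun i => (e.symm i).1 = j)).card = x j := by
  classical
  rw [← Fintype.card_subtype]
  have e1 : {i : Fin N // (e.symm i).1 = j} ≃ {p : Σ j', Fin (x j') // p.1 = j} :=
    Equiv.subtypeEquiv e.symm (fun i => Iff.rfl)
  have e2 : {p : Σ j', Fin (x j') // p.1 = j} ≃ Fin (x j) :=
    { toFun := fun p => Fin.cast (congrArg x p.2) p.1.2
      invFun := fun q => ⟨⟨j, q⟩, rfl⟩
      left_inv := by rintro ⟨⟨j', q⟩, h⟩; subst h; rfl
      right_inv := fun q => rfl }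
  rw [Fintype.card_congr (e1.trans e2), Fintype.card_fin]

/-- Sums over a set can be computed fiberwise. -/
lemma sum_fiber {N d : ℕ} (s : Fin N → Fin d) (T : Finset (Fin N)) (f : Fin d → ℤ) :
    ∑ i ∈ T, f (s i) = ∑ j, ((T.filter (fun i => s i = j)).card : ℤ) * f j := by
  classical
  rw [← Finset.sum_fiberwise_of_maps_to (fun i _ => Finset.mem_univ (s i)) (fun i => f (s i))]
  apply Finset.sum_congr rfl
  intro j _
  rw [Finset.sum_congr rfl (fun i hi => by rw [(Finset.mem_filter.1 hi).2])]
  rw [Finset.sum_const, nsmul_eq_mul]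

/-- Arithmetic: the pigeonhole bound fits under the stated bound. -/
lemma arith (d m M : ℕ) :
    (2 * ((2 * m + 1) * M) + 1) ^ m + m ≤ (d + m + 2) ^ (2 * m + 2) * (M + 1) ^ (2 * m + 2) := by
  set q := (d + m + 2) ^ 2 * (M + 1) ^ 2 with hq
  have h1 : 2 * ((2 * m + 1) * M) + 1 ≤ q := by
    have h2 : (m + 2) ^ 2 * (M + 1) ^ 2 ≤ q := by
      apply Nat.mul_le_mul_right
      apply Nat.pow_le_pow_left
      omega
    nlinarith
  have hβ : (2 * ((2 * m + 1) * M) + 1) ^ m ≤ q ^ m := Nat.pow_le_pow_left h1 m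
  have hqm : m + 1 ≤ q := by
    have h2 : (m + 2) ^ 2 * 1 ≤ q :=
      Nat.mul_le_mul (Nat.pow_le_pow_left (by omega) 2) (Nat.one_le_pow _ _ (by omega))
    have h3 : m + 1 ≤ (m + 2) ^ 2 := by nlinarith
    omega
  have hq1 : 1 ≤ q ^ m := Nat.one_le_pow _ _ (by positivity)
  have htarget : (d + m + 2) ^ (2 * m + 2) * (M + 1) ^ (2 * m + 2) = q ^ (m + 1) := by
    rw [hq, mul_pow, ← pow_mul, ← pow_mul]
    ring_nf
  rw [htarget, pow_succ]
  calc (2 * ((2 * m + 1) * M) + 1) ^ m + m ≤ q ^ m + m * q ^ m := by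
        have : m ≤ m * q ^ m := Nat.le_mul_of_pos_right m (by omega)
        omega
    _ = q ^ m * (m + 1) := by ring
    _ ≤ q ^ m * q := Nat.mul_le_mul_left _ hqm

end Stmt9Aux


/-- Small solutions of integer programs (Papadimitriou 1981): a solvable system
`A x = b`, `x ≥ 0`, with entries bounded by `M`, has a solution whose entries are
bounded by an explicit exponential. -/
theorem stmt_9 (m d : ℕ) (M : ℕ) (A : Matrix (Fin m) (Fin d) ℤ) (b : Fin m → ℤ)
    (hA : ∀ i j, |A i j| ≤ (M : ℤ)) (hb : ∀ i, |b i| ≤ (M : ℤ))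
    (hsol : ∃ x : Fin d → ℕ, A.mulVec (fun j => (x j : ℤ)) = b) :
    ∃ x : Fin d → ℕ, A.mulVec (fun j => (x j : ℤ)) = b ∧
      ∀ j, x j ≤ (d + m + 2) ^ (2 * m + 2) * (M + 1) ^ (2 * m + 2) := by
  classical
  have hex : ∃ n : ℕ, ∃ x : Fin d → ℕ, A.mulVec (fun j => (x j : ℤ)) = b ∧ ∑ j, x j = n := by
    obtain ⟨x, hx⟩ := hsol
    exact ⟨∑ j, x j, x, hx, rfl⟩
  obtain ⟨x, hxsol, hxsum⟩ := Nat.find_spec hex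
  set N := Nat.find hex with hNdef
  refine ⟨x, hxsol, fun j0 => ?_⟩
  have hxj : x j0 ≤ N := by
    calc x j0 ≤ ∑ j, x j :=
          Finset.single_le_sum (fun j _ => Nat.zero_le _) (Finset.mem_univ j0)
      _ = N := hxsum
  set β := 2 * ((2 * m + 1) * M) + 1 with hβdef
  suffices hn : N ≤ β ^ m + m by
    calc x j0 ≤ N := hxj
      _ ≤ β ^ m + m := hn
      _ ≤ _ := Stmt9Aux.arith d m M
  by_contra hbig
  push_neg at hbig
  have hβp : 1 ≤ β ^ m := Nat.one_le_pow _ _ (by omega)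
  have hmN : m + 1 ≤ N := by omega
  have hN1 : 1 ≤ N := by omega
  -- index function realizing multiplicities
  have hcards : Fintype.card (Σ j : Fin d, Fin (x j)) = N := by
    simp [hxsum]
  set e := Fintype.equivFinOfCardEq hcards with hedef
  set s : Fin N → Fin d := fun i => (e.symm i).1 with hsdef
  have hfib : ∀ j, (Finset.univ.filter (fun i => s i = j)).card = x j :=
    fun j => Stmt9Aux.fiber_card x e j
  set u : Fin N → Fin m → ℤ := fun i r => A r (s i) with hudef
  have hxr : ∀ r, ∑ j, A r j * (x j : ℤ) = b r := by
    intro r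
    have := congrFun hxsol r
    simpa [Matrix.mulVec, dotProduct] using this
  have husum : ∀ r, ∑ i, u i r = b r := by
    intro r
    have h2 := Stmt9Aux.sum_fiber s Finset.univ (fun j => A r j)
    calc ∑ i, u i r
        = ∑ j, ((Finset.univ.filter (fun i => s i = j)).card : ℤ) * A r j := h2
      _ = ∑ j, (x j : ℤ) * A r j := by
          apply Finset.sum_congr rfl; intro j _; rw [hfib j]
      _ = b r := by
          rw [← hxr r]; apply Finset.sum_congr rfl; intro j _; ring
  -- rational recentred step vectors
  set w : Fin N → Fin m → ℚ := fun i r => (u i r : ℚ) - (b r : ℚ) / N with hwdef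
  have hNQ : (0:ℚ) < N := by exact_mod_cast hN1
  have hw0 : ∀ r, ∑ i, w i r = 0 := by
    intro r
    have hu' : ∑ i, (u i r : ℚ) = (b r : ℚ) := by exact_mod_cast husum r
    rw [hwdef]
    simp only
    rw [Finset.sum_sub_distrib, hu', Finset.sum_const, Finset.card_univ, Fintype.card_fin,
      nsmul_eq_mul]
    field_simp
    ring
  have hwbound : ∀ i r, |w i r| ≤ 2 * (M:ℚ) := by
    intro i r
    have h1 : |(u i r : ℚ)| ≤ (M:ℚ) := by exact_mod_cast hA r (s i)
    have hb' : |(b r : ℚ)| ≤ (M:ℚ) := by exact_mod_cast hb r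
    have h2 : |(b r : ℚ)/N| ≤ (M:ℚ) := by
      rw [abs_div, abs_of_pos hNQ, div_le_iff₀ hNQ]
      have hN1' : (1:ℚ) ≤ N := by exact_mod_cast hN1
      nlinarith [abs_nonneg ((b r : ℚ))]
    have habs : |(u i r : ℚ) - (b r : ℚ)/N| ≤ |(u i r : ℚ)| + |(b r : ℚ)/N| := abs_sub _ _
    rw [hwdef]
    simp only
    linarith
  obtain ⟨Ach, hprop, hnest⟩ := Stmt9Aux.chain w hw0 (by omega) (N - m) le_rfl
  set S : ℕ → Fin m → ℤ := fun k r => ∑ i ∈ Ach k, u i r with hSdef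
  set c : ℤ := (((2 * m + 1) * M : ℕ) : ℤ) with hcdef
  have hSb : ∀ k, k ∈ Finset.Icc m N → ∀ r, |S k r| ≤ c := by
    intro k hk r
    rw [Finset.mem_Icc] at hk
    obtain ⟨hcardk, lam, hlam⟩ := hprop k (by omega) hk.2
    have hws : |∑ i ∈ Ach k, w i r| ≤ (m:ℚ) * (2 * M) :=
      Stmt9Aux.sum_bound w (Ach k) k (2 * M) (by positivity) hwbound lam hlam hcardk r
    have hrel : ((S k r : ℤ) : ℚ) = (∑ i ∈ Ach k, w i r) + (k:ℚ) * ((b r : ℚ)/N) := by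
      rw [hSdef]
      push_cast
      rw [hwdef]
      simp only
      rw [Finset.sum_sub_distrib, Finset.sum_const, hcardk, nsmul_eq_mul]
      ring
    have hb' : |(b r : ℚ)| ≤ (M:ℚ) := by exact_mod_cast hb r
    have hkb : |(k:ℚ) * ((b r : ℚ)/N)| ≤ (M:ℚ) := by
      rw [abs_mul, abs_div, abs_of_pos hNQ, abs_of_nonneg (by positivity : (0:ℚ) ≤ (k:ℚ))]
      rw [← mul_div_assoc, div_le_iff₀ hNQ]
      have hkN : (k:ℚ) ≤ (N:ℚ) := by exact_mod_cast hk.2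
      nlinarith [abs_nonneg ((b r : ℚ))]
    have htot : |((S k r : ℤ) : ℚ)| ≤ (m:ℚ) * (2 * M) + M := by
      rw [hrel]
      exact (abs_add_le _ _).trans (add_le_add hws hkb)
    have hcQ : ((c : ℤ) : ℚ) = (m:ℚ) * (2 * M) + M := by
      rw [hcdef]; push_cast; ring
    rw [← hcQ] at htot
    exact_mod_cast htot
  -- pigeonhole over the chain
  set T := Fintype.piFinset (fun _ : Fin m => Finset.Icc (-c) c) with hTdef
  have hIcc : (Finset.Icc (-c) c).card = β := by
    rw [Int.card_Icc]
    have hcc : c + 1 - -c = ((2 * ((2 * m + 1) * M) + 1 : ℕ) : ℤ) := by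
      rw [hcdef]; push_cast; ring
    rw [hcc, Int.toNat_natCast, hβdef]
  have hTcard : T.card = β ^ m := by
    rw [hTdef, Fintype.card_piFinset]
    simp [hIcc]
  have hlt : T.card < (Finset.Icc m N).card := by
    rw [hTcard, Nat.card_Icc]
    omega
  have hmap : ∀ k ∈ Finset.Icc m N, S k ∈ T := by
    intro k hk
    rw [hTdef, Fintype.mem_piFinset]
    intro r
    rw [Finset.mem_Icc, ← abs_le]
    exact hSb k hk r
  have key : ∀ k l, k ∈ Finset.Icc m N → l ∈ Finset.Icc m N → k < l → S k = S l → False := by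
    intro k l hk hl hkl hSeq
    rw [Finset.mem_Icc] at hk hl
    have hsub : Ach k ⊆ Ach l :=
      Stmt9Aux.chain_mono Ach (N - (N - m)) N hnest k l (by omega) hkl.le hl.2
    set yD := Ach l \ Ach k with hyD
    set y : Fin d → ℕ := fun j => (yD.filter (fun i => s i = j)).card with hydef
    have hyle : ∀ j, y j ≤ x j := by
      intro j
      rw [hydef, ← hfib j]
      exact Finset.card_le_card (Finset.filter_subset_filter _ (Finset.subset_univ yD))
    have hycard : yD.card = l - k := by
      rw [hyD, Finset.card_sdiff_of_subset hsub, (hprop k (by omega) (by omega)).1,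
        (hprop l (by omega) (by omega)).1]
    have hysum : ∑ j, y j = l - k := by
      rw [← hycard, hydef]
      exact (Finset.card_eq_sum_card_fiberwise (fun i _ => Finset.mem_univ (s i))).symm
    have hAy : ∀ r, ∑ j, ((y j : ℤ)) * A r j = 0 := by
      intro r
      have h1 : ∑ i ∈ yD, u i r = S l r - S k r := by
        have h3 := Finset.sum_sdiff (f := fun i => u i r) hsub
        rw [hSdef]
        simp only
        rw [hyD]
        linarith [h3]
      have h2 : ∑ i ∈ yD, u i r = ∑ j, ((yD.filter (fun i => s i = j)).card : ℤ) * A r j :=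
        Stmt9Aux.sum_fiber s yD (fun j => A r j)
      have h4 : S l r - S k r = 0 := by rw [hSeq]; ring
      rw [hydef]
      simp only
      rw [← h2, h1, h4]
    have hx'sol : A.mulVec (fun j => ((x j - y j : ℕ) : ℤ)) = b := by
      funext r
      have hcast : ∀ j, ((x j - y j : ℕ) : ℤ) = (x j : ℤ) - (y j : ℤ) := fun j =>
        Nat.cast_sub (hyle j)
      have hsplit : ∑ j, A r j * ((x j : ℤ) - (y j : ℤ))
          = ∑ j, A r j * (x j : ℤ) - ∑ j, A r j * (y j : ℤ) := by
        rw [← Finset.sum_sub_distrib]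
        apply Finset.sum_congr rfl; intro j _; ring
      have hAy' : ∑ j, A r j * (y j : ℤ) = 0 := by
        rw [← hAy r]
        apply Finset.sum_congr rfl; intro j _; ring
      simp only [Matrix.mulVec, dotProduct, hcast]
      rw [hsplit, hxr r, hAy', sub_zero]
    have hlt' : ∑ j, (x j - y j) < N := by
      rw [Finset.sum_tsub_distrib Finset.univ (fun j _ => hyle j), hxsum, hysum]
      omega
    exact Nat.find_min hex hlt' ⟨fun j => x j - y j, hx'sol, rfl⟩
  obtain ⟨k, hkmem, l, hlmem, hkl, hSeq⟩ :=
    Finset.exists_ne_map_eq_of_card_lt_of_maps_to hlt hmap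
  rcases hkl.lt_or_gt with h | h
  · exact key k l hkmem hlmem h hSeq
  · exact key l k hlmem hkmem h hSeq.symm
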